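/- Let s = (s_1, ..., s_n) be a sequence of positive integers such that \gcd(s_i, s_{i+1}) = 1 for 1 \le i < n. Then the s-lecture hall cone C_n^{(s)} is Gorenstein if and only if s is u-generated by some sequence u = (u_1, ..., u_{n-1}) of positive integers. Moreover, when such a sequence u exists, the Gorenstein point c of C_n^{(s)} is given by c_1 = 1, c_2 = u_1, and c_{i+1} = u_i c_i - c_{i-1} for 2 \le i < n. -/

import Mathlib

noncomputable section

open scoped Classical

/-- The set of integer lattice points in `ℝ^n`. -/
def intLattice (n : ℕ) : Set (Fin n → ℝ) :=
  Set.range (fun (m : Fin n → ℤ) => fun i => (m i : ℝ))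

/-- `c` is a Gorenstein point of `C`: an integer point in the interior of `C`
with `C° ∩ ℤ^n = c + (C ∩ ℤ^n)`. -/
def IsGorensteinPoint {n : ℕ} (C : Set (Fin n → ℝ)) (c : Fin n → ℝ) : Prop :=
  c ∈ interior C ∧ c ∈ intLattice n ∧
    interior C ∩ intLattice n = (fun x => c + x) '' (C ∩ intLattice n)

/-- A cone is Gorenstein if it has a Gorenstein point. -/
def IsGorensteinCone {n : ℕ} (C : Set (Fin n → ℝ)) : Prop :=
  ∃ c, IsGorensteinPoint C c

/-- The `s`-lecture hall cone `{λ : 0 ≤ λ₁/s₁ ≤ λ₂/s₂ ≤ ⋯ ≤ λₙ/sₙ}`,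
where coordinate `i : Fin n` corresponds to the mathematical index `i+1`. -/
def lhCone (n : ℕ) (s : ℕ → ℤ) : Set (Fin n → ℝ) :=
  {x | (∀ i : Fin n, (i : ℕ) = 0 → 0 ≤ x i / (s 1 : ℝ)) ∧
       (∀ i j : Fin n, (j : ℕ) = (i : ℕ) + 1 →
          x i / (s ((i : ℕ) + 1) : ℝ) ≤ x j / (s ((j : ℕ) + 1) : ℝ))}

/-- The `s`-lecture hall partitions of length `n`: integer points of the cone. -/
def lhPartitions (n : ℕ) (s : ℕ → ℤ) : Set (Fin n → ℤ) :=
  {lam | (fun i => (lam i : ℝ)) ∈ lhCone n s}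

/-- The generating function `f_n^{(s)}(q) = ∑_{λ ∈ L_n^{(s)}} q^{|λ|}` as a power series. -/
def lhGenFun (n : ℕ) (s : ℕ → ℤ) : PowerSeries ℚ :=
  PowerSeries.mk fun m =>
    (Set.ncard {lam : Fin n → ℤ | lam ∈ lhPartitions n s ∧ ∑ i, lam i = (m : ℤ)} : ℚ)

/-- A rational function `r(q)` is self-reciprocal if `r(1/q) = ± q^k r(q)`
for some nonnegative integer `k`. -/
def SelfReciprocalRat (r : RatFunc ℚ) : Prop :=
  ∃ k : ℕ, RatFunc.eval (algebraMap ℚ (RatFunc ℚ)) (RatFunc.X)⁻¹ r = RatFunc.X ^ k * r ∨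
           RatFunc.eval (algebraMap ℚ (RatFunc ℚ)) (RatFunc.X)⁻¹ r = -(RatFunc.X ^ k * r)

/-- A power series is self-reciprocal as a rational function: it is the power series
expansion of a rational function `H/D` (with `D(0) ≠ 0`) which is self-reciprocal. -/
def GenFunSelfReciprocal (f : PowerSeries ℚ) : Prop :=
  ∃ H D : Polynomial ℚ, D.coeff 0 ≠ 0 ∧
    (↑H : PowerSeries ℚ) = f * (↑D : PowerSeries ℚ) ∧
    SelfReciprocalRat (algebraMap (Polynomial ℚ) (RatFunc ℚ) H /
      algebraMap (Polynomial ℚ) (RatFunc ℚ) D)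

/-- The sequence `(s₁,…,sₙ)` is `u`-generated by `(u₁,…,u_{n-1})`:
`s₂ = u₁s₁ - 1` and `s_{i+1} = uᵢsᵢ - s_{i-1}` for `i > 1`. -/
def UGenerated (n : ℕ) (s u : ℕ → ℤ) : Prop :=
  (2 ≤ n → s 2 = u 1 * s 1 - 1) ∧
  ∀ i, 1 < i → i + 1 ≤ n → s (i + 1) = u i * s i - s (i - 1)

variable {n : ℕ} {s : ℕ → ℤ}

lemma mem_lhCone_iff (hs : ∀ i, 1 ≤ i → i ≤ n → 0 < s i) (x : Fin n → ℝ) :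
    x ∈ lhCone n s ↔
      (∀ i : Fin n, (i : ℕ) = 0 → 0 ≤ x i) ∧
      (∀ i j : Fin n, (j : ℕ) = (i : ℕ) + 1 →
        (s ((j : ℕ) + 1) : ℝ) * x i ≤ (s ((i : ℕ) + 1) : ℝ) * x j) := by
  have hpos : ∀ i : Fin n, (0:ℝ) < (s ((i : ℕ) + 1) : ℝ) := fun i => by
    exact_mod_cast hs _ (Nat.le_add_left 1 _) (Nat.succ_le_of_lt i.isLt)
  constructor
  · rintro ⟨h0, h1⟩
    refine ⟨fun i hi => ?_, fun i j hij => ?_⟩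
    · have h1pos : (0:ℝ) < (s 1 : ℝ) := by
        have := hpos i; rw [hi] at this; exact_mod_cast this
      have := h0 i hi
      have := (div_nonneg_iff.mp this)
      rcases this with ⟨h, _⟩ | ⟨h, h'⟩
      · exact h
      · nlinarith
    · have := h1 i j hij
      rw [div_le_div_iff₀ (hpos i) (hpos j)] at this
      linarith [this]
  · rintro ⟨h0, h1⟩
    refine ⟨fun i hi => ?_, fun i j hij => ?_⟩
    · have h1pos : (0:ℝ) < (s 1 : ℝ) := by
        have := hpos i; rw [hi] at this; exact_mod_cast this
      exact div_nonneg (h0 i hi) h1pos.le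
    · rw [div_le_div_iff₀ (hpos i) (hpos j)]
      linarith [h1 i j hij]

lemma mem_interior_lhCone_iff (hs : ∀ i, 1 ≤ i → i ≤ n → 0 < s i) (x : Fin n → ℝ) :
    x ∈ interior (lhCone n s) ↔
      (∀ i : Fin n, (i : ℕ) = 0 → 0 < x i) ∧
      (∀ i j : Fin n, (j : ℕ) = (i : ℕ) + 1 →
        (s ((j : ℕ) + 1) : ℝ) * x i < (s ((i : ℕ) + 1) : ℝ) * x j) := by
  have hpos : ∀ i : Fin n, (0:ℝ) < (s ((i : ℕ) + 1) : ℝ) := fun i => by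
    exact_mod_cast hs _ (Nat.le_add_left 1 _) (Nat.succ_le_of_lt i.isLt)
  constructor
  · intro hx
    obtain ⟨ε, hε, hball⟩ := Metric.mem_nhds_iff.mp (mem_interior_iff_mem_nhds.mp hx)
    constructor
    · intro i hi
      set x' := Function.update x i (x i - ε/2) with hx'
      have hx'ball : x' ∈ Metric.ball x ε := by
        rw [Metric.mem_ball, dist_pi_lt_iff hε]
        intro k
        by_cases hk : k = i
        · subst hk
          have : dist (x' k) (x k) = ε/2 := by
            rw [hx', Function.update_self, Real.dist_eq,
              show x k - ε/2 - x k = -(ε/2) by ring, abs_neg, abs_of_pos (by linarith)]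
          rw [this]; linarith
        · simpa [hx', Function.update_of_ne hk] using hε
      have hmem := (mem_lhCone_iff hs x').mp (hball hx'ball)
      have := hmem.1 i hi
      rw [hx', Function.update_self] at this
      linarith
    · intro i j hij
      have hne : i ≠ j := by
        intro h; subst h; omega
      set x' := Function.update x i (x i + ε/2) with hx'
      have hx'ball : x' ∈ Metric.ball x ε := by
        rw [Metric.mem_ball, dist_pi_lt_iff hε]
        intro k
        by_cases hk : k = i
        · subst hk
          have : dist (x' k) (x k) = ε/2 := by
            rw [hx', Function.update_self, Real.dist_eq,
              show x k + ε/2 - x k = ε/2 by ring, abs_of_pos (by linarith)]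
          rw [this]; linarith
        · simpa [hx', Function.update_of_ne hk] using hε
      have hmem := (mem_lhCone_iff hs x').mp (hball hx'ball)
      have h2 := hmem.2 i j hij
      rw [hx', Function.update_self, Function.update_of_ne hne.symm] at h2
      have := hpos j
      nlinarith
  · rintro ⟨h0, h1⟩
    apply mem_interior.mpr
    refine ⟨{y | (∀ i : Fin n, (i : ℕ) = 0 → 0 < y i) ∧
      (∀ i j : Fin n, (j : ℕ) = (i : ℕ) + 1 →
        (s ((j : ℕ) + 1) : ℝ) * y i < (s ((i : ℕ) + 1) : ℝ) * y j)}, ?_, ?_, ⟨h0, h1⟩⟩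
    · intro y hy
      exact (mem_lhCone_iff hs y).mpr ⟨fun i hi => (hy.1 i hi).le,
        fun i j hij => (hy.2 i j hij).le⟩
    · have : {y : Fin n → ℝ | (∀ i : Fin n, (i : ℕ) = 0 → 0 < y i) ∧
      (∀ i j : Fin n, (j : ℕ) = (i : ℕ) + 1 →
        (s ((j : ℕ) + 1) : ℝ) * y i < (s ((i : ℕ) + 1) : ℝ) * y j)} =
        (⋂ i : Fin n, {y | (i : ℕ) = 0 → 0 < y i}) ∩
        (⋂ i : Fin n, ⋂ j : Fin n, {y | (j : ℕ) = (i : ℕ) + 1 →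
          (s ((j : ℕ) + 1) : ℝ) * y i < (s ((i : ℕ) + 1) : ℝ) * y j}) := by
        ext y; simp [Set.mem_iInter]
      rw [this]
      apply IsOpen.inter
      · apply isOpen_iInter_of_finite
        intro i
        by_cases hi : (i : ℕ) = 0
        · have : {y : Fin n → ℝ | (i : ℕ) = 0 → 0 < y i} = {y | 0 < y i} := by
            ext y; simp [hi]
          rw [this]
          exact isOpen_lt continuous_const (continuous_apply i)
        · have : {y : Fin n → ℝ | (i : ℕ) = 0 → 0 < y i} = Set.univ := by
            ext y; simp [hi]
          rw [this]; exact isOpen_univ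
      · apply isOpen_iInter_of_finite
        intro i
        apply isOpen_iInter_of_finite
        intro j
        by_cases hij : (j : ℕ) = (i : ℕ) + 1
        · have : {y : Fin n → ℝ | (j : ℕ) = (i : ℕ) + 1 →
            (s ((j : ℕ) + 1) : ℝ) * y i < (s ((i : ℕ) + 1) : ℝ) * y j} =
            {y | (s ((j : ℕ) + 1) : ℝ) * y i < (s ((i : ℕ) + 1) : ℝ) * y j} := by
            ext y; simp [hij]
          rw [this]
          exact isOpen_lt (continuous_const.mul (continuous_apply i)) (continuous_const.mul (continuous_apply j))
        · have : {y : Fin n → ℝ | (j : ℕ) = (i : ℕ) + 1 →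
            (s ((j : ℕ) + 1) : ℝ) * y i < (s ((i : ℕ) + 1) : ℝ) * y j} = Set.univ := by
            ext y; simp [hij]
          rw [this]; exact isOpen_univ

/-- A "good point": `c 1 = 1` and `s i * c (i+1) - s (i+1) * c i = 1` for `1 ≤ i < n`. -/
def GoodPt (n : ℕ) (s c : ℕ → ℤ) : Prop :=
  c 1 = 1 ∧ ∀ i, 1 ≤ i → i < n → s i * c (i + 1) - s (i + 1) * c i = 1

lemma int_mem_lhCone_iff (hs : ∀ i, 1 ≤ i → i ≤ n → 0 < s i) (m : Fin n → ℤ) :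
    (fun i => (m i : ℝ)) ∈ lhCone n s ↔
      (∀ i : Fin n, (i : ℕ) = 0 → 0 ≤ m i) ∧
      (∀ i j : Fin n, (j : ℕ) = (i : ℕ) + 1 →
        s ((j : ℕ) + 1) * m i ≤ s ((i : ℕ) + 1) * m j) := by
  rw [mem_lhCone_iff hs]
  constructor <;> rintro ⟨h0, h1⟩ <;>
    refine ⟨fun i hi => ?_, fun i j hij => ?_⟩
  · exact_mod_cast h0 i hi
  · exact_mod_cast h1 i j hij
  · exact_mod_cast h0 i hi
  · exact_mod_cast h1 i j hij

lemma int_mem_interior_lhCone_iff (hs : ∀ i, 1 ≤ i → i ≤ n → 0 < s i) (m : Fin n → ℤ) :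
    (fun i => (m i : ℝ)) ∈ interior (lhCone n s) ↔
      (∀ i : Fin n, (i : ℕ) = 0 → 0 < m i) ∧
      (∀ i j : Fin n, (j : ℕ) = (i : ℕ) + 1 →
        s ((j : ℕ) + 1) * m i < s ((i : ℕ) + 1) * m j) := by
  rw [mem_interior_lhCone_iff hs]
  constructor <;> rintro ⟨h0, h1⟩ <;>
    refine ⟨fun i hi => ?_, fun i j hij => ?_⟩
  · exact_mod_cast h0 i hi
  · exact_mod_cast h1 i j hij
  · exact_mod_cast h0 i hi
  · exact_mod_cast h1 i j hij

lemma goodPt_isGorensteinPoint (hs : ∀ i, 1 ≤ i → i ≤ n → 0 < s i)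
    {c : ℕ → ℤ} (hc : GoodPt n s c) :
    IsGorensteinPoint (lhCone n s) (fun i : Fin n => (c ((i : ℕ) + 1) : ℝ)) := by
  obtain ⟨hc1, hcf⟩ := hc
  have hform : ∀ i j : Fin n, (j : ℕ) = (i : ℕ) + 1 →
      s ((i : ℕ) + 1) * c ((j : ℕ) + 1) - s ((j : ℕ) + 1) * c ((i : ℕ) + 1) = 1 := by
    intro i j hij
    have := hcf ((i : ℕ) + 1) (Nat.le_add_left 1 _) (by omega)
    rw [hij]; convert this using 3 <;> omega
  refine ⟨?_, ⟨fun i => c ((i : ℕ) + 1), rfl⟩, ?_⟩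
  · rw [int_mem_interior_lhCone_iff hs]
    refine ⟨fun i hi => by rw [hi, hc1]; norm_num, fun i j hij => by have := hform i j hij; omega⟩
  · ext y
    constructor
    · rintro ⟨hy, m, rfl⟩
      rw [int_mem_interior_lhCone_iff hs] at hy
      refine ⟨fun i => ((m i - c ((i : ℕ) + 1) : ℤ) : ℝ), ⟨?_, ⟨_, rfl⟩⟩, ?_⟩
      · rw [int_mem_lhCone_iff hs]
        refine ⟨fun i hi => ?_, fun i j hij => ?_⟩
        · have := hy.1 i hi
          have h2 : c ((i : ℕ) + 1) = 1 := by rw [hi]; exact hc1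
          omega
        · have h1 := hy.2 i j hij
          have h2 := hform i j hij
          nlinarith [h1, h2]
      · funext i; simp only [Pi.add_apply]; push_cast; ring
    · rintro ⟨z, ⟨hz, m, rfl⟩, rfl⟩
      rw [int_mem_lhCone_iff hs] at hz
      have : ((fun x => (fun i : Fin n => (c ((i : ℕ) + 1) : ℝ)) + x) (fun i => (m i : ℝ)))
          = fun i : Fin n => ((c ((i : ℕ) + 1) + m i : ℤ) : ℝ) := by
        funext i; push_cast; rfl
      rw [this]
      refine ⟨?_, ⟨_, rfl⟩⟩
      rw [int_mem_interior_lhCone_iff hs]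
      refine ⟨fun i hi => ?_, fun i j hij => ?_⟩
      · have := hz.1 i hi
        have h2 : c ((i : ℕ) + 1) = 1 := by rw [hi]; exact hc1
        omega
      · have h1 := hz.2 i j hij
        have h2 := hform i j hij
        nlinarith [h1, h2]

lemma ugen_goodPt {u c : ℕ → ℤ} (hu : UGenerated n s u)
    (hc1 : c 1 = 1) (hc2 : 2 ≤ n → c 2 = u 1)
    (hcr : ∀ i, 2 ≤ i → i < n → c (i + 1) = u i * c i - c (i - 1)) :
    GoodPt n s c := by
  refine ⟨hc1, ?_⟩
  intro i
  induction i with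
  | zero => omega
  | succ j ih =>
    intro h1 hn
    rcases Nat.lt_or_ge j 1 with h | h
    · have hj : j = 0 := by omega
      subst hj
      have hs2 := hu.1 (by omega)
      have hc2' := hc2 (by omega)
      rw [hc1, hc2', hs2]; ring
    · have hsr := hu.2 (j + 1) (by omega) (by omega)
      have hcr' := hcr (j + 1) (by omega) (by omega)
      have ihj := ih h (by omega)
      simp only [Nat.add_sub_cancel] at hsr hcr'
      rw [hsr, hcr']
      linear_combination ihj

lemma goodPt_dvd (hs : ∀ i, 1 ≤ i → i ≤ n → 0 < s i)
    {c : ℕ → ℤ} (hc : GoodPt n s c) {i : ℕ} (h2 : 2 ≤ i) (hn : i < n) :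
    ∃ w : ℤ, s (i + 1) + s (i - 1) = s i * w ∧ c (i + 1) + c (i - 1) = c i * w := by
  obtain ⟨hc1, hcf⟩ := hc
  have E1 := hcf (i - 1) (by omega) (by omega)
  have E2 := hcf i (by omega) hn
  rw [show i - 1 + 1 = i by omega] at E1
  have hco : IsCoprime (s i) (c i) :=
    ⟨-(c (i - 1)), s (i - 1), by linear_combination E1⟩
  have hmul : s i ∣ c i * (s (i + 1) + s (i - 1)) :=
    ⟨c (i + 1) + c (i - 1), by linear_combination E1 - E2⟩
  obtain ⟨w, hw⟩ := hco.dvd_of_dvd_mul_left hmul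
  refine ⟨w, hw, ?_⟩
  -- c i * (s (i+1) + s (i-1)) = s i * (c (i+1) + c (i-1)), so s i * (c(i+1)+c(i-1)) = c i * s i * w
  have hsi : s i ≠ 0 := by have := hs i (by omega) (by omega); omega
  have : s i * (c (i + 1) + c (i - 1)) = s i * (c i * w) := by
    have h3 : c i * (s (i + 1) + s (i - 1)) = s i * (c (i + 1) + c (i - 1)) := by
      linear_combination E1 - E2
    rw [hw] at h3
    linear_combination -h3
  exact mul_left_cancel₀ hsi this

lemma goodPt_exists_u (hs : ∀ i, 1 ≤ i → i ≤ n → 0 < s i)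
    {c : ℕ → ℤ} (hc : GoodPt n s c) :
    ∃ u : ℕ → ℤ, (∀ i, 1 ≤ i → i < n → 0 < u i) ∧ UGenerated n s u := by
  classical
  refine ⟨fun i => if h : 2 ≤ i ∧ i < n then Classical.choose (goodPt_dvd hs hc h.1 h.2)
    else c 2, ?_, ?_, ?_⟩
  · intro i h1 hn
    rcases Nat.lt_or_ge i 2 with h | h
    · have : i = 1 := by omega
      subst this
      simp only [dif_neg (by omega : ¬ (2 ≤ 1 ∧ 1 < n))]
      have E := hc.2 1 le_rfl hn
      rw [hc.1] at E
      have hs1 := hs 1 (by omega) (by omega)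
      have hs2 := hs 2 (by omega) (by omega)
      nlinarith
    · simp only [dif_pos (⟨h, hn⟩ : 2 ≤ i ∧ i < n)]
      obtain ⟨hw, -⟩ := Classical.choose_spec (goodPt_dvd hs hc h hn)
      have hsi := hs i (by omega) (by omega)
      have hsi1 := hs (i + 1) (by omega) (by omega)
      have hsi0 := hs (i - 1) (by omega) (by omega)
      nlinarith
  · intro h2
    have E := hc.2 1 le_rfl (by omega)
    rw [hc.1] at E
    simp only [dif_neg (by omega : ¬ (2 ≤ 1 ∧ 1 < n))]
    linarith
  · intro i h1 hn
    simp only [dif_pos (⟨by omega, by omega⟩ : 2 ≤ i ∧ i < n)]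
    obtain ⟨hw, -⟩ := Classical.choose_spec (goodPt_dvd hs hc (by omega : 2 ≤ i) (by omega))
    linarith

/-- Step upward: given `y j = p`, produce `y (j+1)` with `1 ≤ s j * y (j+1) - s (j+1) * y j`. -/
def upStep (s : ℕ → ℤ) (j : ℕ) (p : ℤ) : ℤ := 1 + (s (j + 1) * p) / s j

/-- Step downward: given `y (j+1) = p`, produce `y j` with `1 ≤ s j * y (j+1) - s (j+1) * y j`. -/
def dnStep (s : ℕ → ℤ) (j : ℕ) (p : ℤ) : ℤ := (s j * p - 1) / s (j + 1)

lemma upStep_form {j : ℕ} (hj : 0 < s j) (p : ℤ) :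
    1 ≤ s j * upStep s j p - s (j + 1) * p := by
  unfold upStep
  have h1 : s (j + 1) * p % s j < s j := Int.emod_lt_of_pos _ hj
  have h2 : 0 ≤ s (j + 1) * p % s j := Int.emod_nonneg _ (by omega)
  have h3 : s j * (s (j + 1) * p / s j) = s (j + 1) * p - s (j + 1) * p % s j := by
    rw [Int.emod_def]; ring
  rw [mul_add, mul_one, h3]
  omega

lemma dnStep_form {j : ℕ} (hj : 0 < s (j + 1)) (p : ℤ) :
    1 ≤ s j * p - s (j + 1) * dnStep s j p := by
  unfold dnStep
  have h1 : (s j * p - 1) % s (j + 1) < s (j + 1) := Int.emod_lt_of_pos _ hj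
  have h2 : 0 ≤ (s j * p - 1) % s (j + 1) := Int.emod_nonneg _ (by omega)
  have h3 : s (j + 1) * ((s j * p - 1) / s (j + 1))
      = (s j * p - 1) - (s j * p - 1) % s (j + 1) := by
    rw [Int.emod_def]; ring
  rw [h3]
  omega

/-- `upSeq s k a t` is the value at index `k + t`, starting from value `a` at index `k`. -/
def upSeq (s : ℕ → ℤ) (k : ℕ) (a : ℤ) : ℕ → ℤ
  | 0 => a
  | t + 1 => upStep s (k + t) (upSeq s k a t)

/-- `dnSeq s k a t` is the value at index `k - t`, starting from value `a` at index `k`. -/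
def dnSeq (s : ℕ → ℤ) (k : ℕ) (a : ℤ) : ℕ → ℤ
  | 0 => a
  | t + 1 => dnStep s (k - t - 1) (dnSeq s k a t)

lemma exists_strictvec0 (hs : ∀ i, 1 ≤ i → i ≤ n → 0 < s i) :
    ∃ Y : ℕ → ℤ, Y 1 = 1 ∧ ∀ j, 1 ≤ j → j < n → 1 ≤ s j * Y (j + 1) - s (j + 1) * Y j := by
  refine ⟨fun j => upSeq s 1 1 (j - 1), rfl, ?_⟩
  intro j h1 hn
  have e1 : j + 1 - 1 = (j - 1) + 1 := by omega
  have e2 : 1 + (j - 1) = j := by omega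
  show 1 ≤ s j * upSeq s 1 1 (j + 1 - 1) - s (j + 1) * upSeq s 1 1 (j - 1)
  rw [e1, upSeq, e2]
  exact upStep_form (hs j h1 (by omega)) _

lemma exists_strictvec (hs : ∀ i, 1 ≤ i → i ≤ n → 0 < s i) {k : ℕ}
    (hk1 : 1 ≤ k) (hkn : k < n) (hg : Int.gcd (s k) (s (k + 1)) = 1) :
    ∃ Y : ℕ → ℤ, 1 ≤ Y 1 ∧
      (∀ j, 1 ≤ j → j < n → 1 ≤ s j * Y (j + 1) - s (j + 1) * Y j) ∧
      s k * Y (k + 1) - s (k + 1) * Y k = 1 := by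
  set A := Int.gcdA (s k) (s (k + 1)) with hA
  set B := Int.gcdB (s k) (s (k + 1)) with hB
  have hbez : s k * A + s (k + 1) * B = 1 := by
    have := Int.gcd_eq_gcd_ab (s k) (s (k + 1))
    rw [hg] at this
    exact_mod_cast this.symm
  set y : ℕ → ℤ := fun j => if j ≤ k then dnSeq s k (-B) (k - j) else upSeq s (k + 1) A (j - (k + 1))
    with hy
  have hyk : y k = -B := by simp [hy, dnSeq]
  have hyk1 : y (k + 1) = A := by
    have : ¬ (k + 1 ≤ k) := by omega
    simp [hy, this, upSeq]
  have hform : ∀ j, 1 ≤ j → j < n → 1 ≤ s j * y (j + 1) - s (j + 1) * y j ∧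
      (j = k → s j * y (j + 1) - s (j + 1) * y j = 1) := by
    intro j h1 hn'
    rcases lt_trichotomy j k with h | h | h
    · -- down region : j < k, j+1 ≤ k
      have hyj1 : y (j + 1) = dnSeq s k (-B) (k - j - 1) := by
        simp only [hy, if_pos (by omega : j + 1 ≤ k)]
        congr 1 <;> omega
      have hyj : y j = dnStep s j (dnSeq s k (-B) (k - j - 1)) := by
        simp only [hy, if_pos (by omega : j ≤ k)]
        have e : k - j = (k - j - 1) + 1 := by omega
        rw [e, dnSeq]
        congr 2 <;> omega
      rw [hyj1, hyj]
      refine ⟨dnStep_form (hs (j + 1) (by omega) (by omega)) _, fun hjk => by omega⟩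
    · subst h
      rw [hyk, hyk1]
      constructor
      · rw [show s j * A - s (j + 1) * -B = s j * A + s (j + 1) * B by ring, hbez]
      · intro _
        rw [show s j * A - s (j + 1) * -B = s j * A + s (j + 1) * B by ring, hbez]
    · -- up region : j ≥ k+1
      have hyj : y j = upSeq s (k + 1) A (j - (k + 1)) := by
        simp only [hy, if_neg (by omega : ¬ (j ≤ k))]
      have hyj1 : y (j + 1) = upStep s j (upSeq s (k + 1) A (j - (k + 1))) := by
        simp only [hy, if_neg (by omega : ¬ (j + 1 ≤ k))]
        have e : j + 1 - (k + 1) = (j - (k + 1)) + 1 := by omega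
        rw [e, upSeq]
        congr 1 <;> omega
      rw [hyj, hyj1]
      refine ⟨upStep_form (hs j (by omega) (by omega)) _, fun hjk => by omega⟩
  set M : ℤ := max (1 - y 1) 0 with hM
  refine ⟨fun j => y j + M * s j, ?_, ?_, ?_⟩
  · have hM0 : 0 ≤ M := le_max_right _ _
    have hM1 : 1 - y 1 ≤ M := le_max_left _ _
    have hs1 : 1 ≤ s 1 := hs 1 le_rfl (by omega)
    show 1 ≤ y 1 + M * s 1
    nlinarith
  · intro j h1 hn'
    have := (hform j h1 hn').1
    show 1 ≤ s j * (y (j + 1) + M * s (j + 1)) - s (j + 1) * (y j + M * s j)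
    nlinarith [this]
  · have := (hform k hk1 hkn).2 rfl
    show s k * (y (k + 1) + M * s (k + 1)) - s (k + 1) * (y k + M * s k) = 1
    linear_combination this

lemma strictvec_interior (hs : ∀ i, 1 ≤ i → i ≤ n → 0 < s i) {Y : ℕ → ℤ} (h1 : 1 ≤ Y 1)
    (hf : ∀ j, 1 ≤ j → j < n → 1 ≤ s j * Y (j + 1) - s (j + 1) * Y j) :
    (fun i : Fin n => (Y ((i : ℕ) + 1) : ℝ)) ∈ interior (lhCone n s) := by
  rw [int_mem_interior_lhCone_iff hs]
  constructor
  · intro i hi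
    rw [hi]
    simpa using (show 0 < Y 1 by omega)
  · intro i j hij
    have := hf ((i : ℕ) + 1) (by omega) (by omega)
    rw [hij]
    linarith

lemma gor_decomp {m : Fin n → ℤ}
    (heq : interior (lhCone n s) ∩ intLattice n =
      (fun x => (fun i => (m i : ℝ)) + x) '' (lhCone n s ∩ intLattice n))
    {yv : Fin n → ℤ} (hy : (fun i => (yv i : ℝ)) ∈ interior (lhCone n s)) :
    ∃ w : Fin n → ℤ, ((fun i => (w i : ℝ)) ∈ lhCone n s) ∧ ∀ i, yv i = m i + w i := by
  have hmem : (fun i => (yv i : ℝ)) ∈ interior (lhCone n s) ∩ intLattice n := ⟨hy, ⟨yv, rfl⟩⟩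
  rw [heq] at hmem
  obtain ⟨z, ⟨hz, w, rfl⟩, hzz⟩ := hmem
  refine ⟨w, hz, fun i => ?_⟩
  have := congrFun hzz i
  simp only [Pi.add_apply] at this
  exact_mod_cast this.symm

lemma gorenstein_goodPt (hs : ∀ i, 1 ≤ i → i ≤ n → 0 < s i)
    (hgcd : ∀ i, 1 ≤ i → i < n → Int.gcd (s i) (s (i + 1)) = 1)
    (hG : IsGorensteinCone (lhCone n s)) : ∃ c : ℕ → ℤ, GoodPt n s c := by
  rcases Nat.eq_zero_or_pos n with hn | hn
  · exact ⟨fun _ => 1, rfl, fun i h1 h2 => by omega⟩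
  obtain ⟨cr, hci, ⟨m, rfl⟩, heq⟩ := hG
  rw [int_mem_interior_lhCone_iff hs] at hci
  refine ⟨fun j => if h : 1 ≤ j ∧ j ≤ n then m ⟨j - 1, by omega⟩ else 1, ?_, ?_⟩
  · -- c 1 = 1, i.e. m ⟨0⟩ = 1
    have hn0 : 0 < n := hn
    simp only [dif_pos (⟨le_rfl, hn⟩ : 1 ≤ 1 ∧ 1 ≤ n)]
    show m ⟨0, hn0⟩ = 1
    have hpos : 0 < m ⟨0, hn0⟩ := hci.1 _ rfl
    obtain ⟨Y, hY1, hYf⟩ := exists_strictvec0 hs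
    obtain ⟨w, hw, hsum⟩ := gor_decomp heq (strictvec_interior hs (by omega) hYf)
    rw [int_mem_lhCone_iff hs] at hw
    have h0 : 0 ≤ w ⟨0, hn0⟩ := hw.1 _ rfl
    have h1 : Y (0 + 1) = m ⟨0, hn0⟩ + w ⟨0, hn0⟩ := hsum ⟨0, hn0⟩
    rw [Nat.zero_add, hY1] at h1
    omega
  · -- forms
    intro k hk1 hkn
    have hkm : k - 1 < n := by omega
    have hkk : k < n := hkn
    set i0 : Fin n := ⟨k - 1, hkm⟩ with hi0
    set i1 : Fin n := ⟨k, hkk⟩ with hi1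
    have hv0 : (i0 : ℕ) = k - 1 := rfl
    have hv1 : (i1 : ℕ) = k := rfl
    have hij : (i1 : ℕ) = (i0 : ℕ) + 1 := by omega
    have hkid : k - 1 + 1 = k := by omega
    simp only [dif_pos (⟨by omega, by omega⟩ : 1 ≤ k + 1 ∧ k + 1 ≤ n),
      dif_pos (⟨by omega, by omega⟩ : 1 ≤ k ∧ k ≤ n)]
    show s k * m i1 - s (k + 1) * m i0 = 1
    have hge := hci.2 i0 i1 hij
    rw [hij, hv0, hkid] at hge
    have ha : s (k + 1) * m i0 + 1 ≤ s k * m i1 := Int.add_one_le_iff.mpr hge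
    obtain ⟨Y, hY1, hYf, hYk⟩ := exists_strictvec hs hk1 hkn (hgcd k hk1 hkn)
    obtain ⟨w, hw, hsum⟩ := gor_decomp heq (strictvec_interior hs hY1 hYf)
    rw [int_mem_lhCone_iff hs] at hw
    have hwk := hw.2 i0 i1 hij
    rw [hij, hv0, hkid] at hwk
    have e1 : Y k = m i0 + w i0 := by
      have := hsum i0
      rw [hv0, hkid] at this
      exact this
    have e2 : Y (k + 1) = m i1 + w i1 := by
      have := hsum i1
      rw [hv1] at this
      exact this
    rw [e1, e2] at hYk
    have hab : (s k * m i1 - s (k + 1) * m i0) + (s k * w i1 - s (k + 1) * w i0) = 1 := by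
      linear_combination hYk
    linarith [hab, hwk, ha]

def mkcAux (u : ℕ → ℤ) : ℕ → ℤ × ℤ
  | 0 => (1, u 1)
  | t + 1 => ((mkcAux u t).2, u (t + 2) * (mkcAux u t).2 - (mkcAux u t).1)

def mkc (u : ℕ → ℤ) (j : ℕ) : ℤ := if j = 0 then 0 else (mkcAux u (j - 1)).1

lemma mkc_one (u : ℕ → ℤ) : mkc u 1 = 1 := rfl

lemma mkc_two (u : ℕ → ℤ) : mkc u 2 = u 1 := rfl

lemma mkc_rec (u : ℕ → ℤ) (i : ℕ) (h : 2 ≤ i) :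
    mkc u (i + 1) = u i * mkc u i - mkc u (i - 1) := by
  obtain ⟨t, rfl⟩ : ∃ t, i = t + 2 := ⟨i - 2, by omega⟩
  show (mkcAux u (t + 2)).1 = u (t + 2) * (mkcAux u (t + 1)).1 - (mkcAux u t).1
  simp [mkcAux]


/-- If `gcd(sᵢ, s_{i+1}) = 1` for `1 ≤ i < n`, then `C_n^{(s)}` is
Gorenstein iff `s` is `u`-generated by some sequence of positive integers; in that
case the Gorenstein point `c` satisfies `c₁ = 1`, `c₂ = u₁`, and
`c_{i+1} = uᵢcᵢ - c_{i-1}` for `2 ≤ i < n`. -/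
theorem stmt7 (n : ℕ) (s : ℕ → ℤ) (hs : ∀ i, 1 ≤ i → i ≤ n → 0 < s i)
    (hgcd : ∀ i, 1 ≤ i → i < n → Int.gcd (s i) (s (i + 1)) = 1) :
    (IsGorensteinCone (lhCone n s) ↔
      ∃ u : ℕ → ℤ, (∀ i, 1 ≤ i → i < n → 0 < u i) ∧ UGenerated n s u) ∧
    (∀ u : ℕ → ℤ, (∀ i, 1 ≤ i → i < n → 0 < u i) → UGenerated n s u →
      ∀ c : ℕ → ℤ, c 1 = 1 → (2 ≤ n → c 2 = u 1) →
        (∀ i, 2 ≤ i → i < n → c (i + 1) = u i * c i - c (i - 1)) →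
        IsGorensteinPoint (lhCone n s) (fun i : Fin n => (c ((i : ℕ) + 1) : ℝ))) := by
  constructor
  · constructor
    · intro hG
      obtain ⟨c, hc⟩ := gorenstein_goodPt hs hgcd hG
      exact goodPt_exists_u hs hc
    · rintro ⟨u, hu, hugen⟩
      exact ⟨_, goodPt_isGorensteinPoint hs
        (ugen_goodPt hugen (mkc_one u) (fun _ => mkc_two u)
          (fun i h2 _ => mkc_rec u i h2))⟩
  · intro u hu hugen c hc1 hc2 hcr
    exact goodPt_isGorensteinPoint hs (ugen_goodPt hugen hc1 hc2 hcr)
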